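/- Suppose T_1,...,T_T are i.i.d. Geometric(p) random variables (P(T_b = k) = p(1−p)^{k−1} for k = 1,2,...) with 0 < p and T·p < 1, and T ≥ 2. Then P(P_{<t} ≤ t − 1 for all t ∈ {2,...,T}) ≥ 1 − 2 log(T) · T p / (1 − T p)²; that is, the perishing process is δ-offset-expiring for every δ ≥ 2 log(T) · T p / (1 − T p)². -/

import Mathlib

open MeasureTheory ProbabilityTheory Finset

lemma one_sub_inv_le_log {x : ℝ} (hx : 0 < x) : 1 - 1/x ≤ Real.log x := by
  have h := Real.log_le_sub_one_of_pos (show (0:ℝ) < 1/x by positivity)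
  rw [one_div, Real.log_inv, inv_eq_one_div] at h
  linarith

lemma harmonic_le_log : ∀ n : ℕ, 2 ≤ n → ∑ t ∈ Finset.Icc 2 n, (1:ℝ)/t ≤ Real.log n := by
  intro n hn
  induction n, hn using Nat.le_induction with
  | base =>
    rw [Finset.Icc_self, Finset.sum_singleton]
    have := one_sub_inv_le_log (show (0:ℝ) < 2 by norm_num)
    norm_num at this ⊢
    linarith
  | succ n hn ih =>
    rw [Finset.sum_Icc_succ_top (by omega : 2 ≤ n+1)]
    have hn0 : (0:ℝ) < n := by
      have : (2:ℝ) ≤ n := by exact_mod_cast hn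
      linarith
    have hn1 : (0:ℝ) < (n:ℝ)+1 := by linarith
    have h := one_sub_inv_le_log (show (0:ℝ) < ((n:ℝ)+1)/n by positivity)
    rw [Real.log_div (by linarith) hn0.ne'] at h
    have h2 : 1/(((n:ℝ)+1)/n) = n/((n:ℝ)+1) := by rw [one_div_div]
    rw [h2] at h
    have h3 : 1 - (n:ℝ)/((n:ℝ)+1) = 1/((n:ℝ)+1) := by field_simp; ring
    rw [h3] at h
    push_cast
    push_cast at ih
    linarith

/-- Suppose `Tb 1, …, Tb T` are i.i.d. `Geometric(p)` perishing times
(`P(Tb b = k) = p (1−p)^{k−1}` for `k ≥ 1`) with `0 < p`, `T·p < 1` and `T ≥ 2`, and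
`P_{<t} = Σ_b 1{Tb b < t}`. Then
`P(P_{<t} ≤ t − 1 for all t ∈ {2,…,T}) ≥ 1 − 2 log(T)·Tp/(1 − Tp)²`; that is, the process is
`δ`-offset-expiring for every `δ ≥ 2 log(T)·Tp/(1 − Tp)²`. -/
theorem stmt10 {Ω : Type*} [MeasurableSpace Ω] (μ : Measure Ω) [IsProbabilityMeasure μ]
    (T : ℕ) (hT : 2 ≤ T)
    (p : ℝ) (hp : 0 < p) (hTp : (T : ℝ) * p < 1)
    (Tb : Fin T → Ω → ℕ) (hmeas : ∀ b, Measurable (Tb b))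
    (hindep : iIndepFun Tb μ)
    (hgeom : ∀ b : Fin T, ∀ k : ℕ, 1 ≤ k →
      μ {ω | Tb b ω = k} = ENNReal.ofReal (p * (1 - p) ^ (k - 1)))
    (hTb1 : ∀ b, ∀ᵐ ω ∂μ, 1 ≤ Tb b ω) :
    1 - 2 * Real.log T * ((T : ℝ) * p) / (1 - (T : ℝ) * p) ^ 2
      ≤ (μ {ω | ∀ t ∈ Finset.Icc 2 T,
          (Finset.univ.filter (fun b : Fin T => Tb b ω < t)).card ≤ t - 1}).toReal := by
  have hT2R : (2:ℝ) ≤ T := by exact_mod_cast hT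
  have hTpos : (0:ℝ) < T := by linarith
  have h1Tp : (0:ℝ) < 1 - (T:ℝ) * p := by linarith
  have hp1 : p < 1 := by nlinarith
  have hlog0 : 0 ≤ Real.log T := Real.log_nonneg (by linarith)
  -- Per-round Chebyshev bound
  have key : ∀ t ∈ Finset.Icc 2 T,
      μ {ω | t ≤ (Finset.univ.filter (fun b : Fin T => Tb b ω < t)).card}
        ≤ ENNReal.ofReal ((T:ℝ) * p / ((t:ℝ) * (1 - (T:ℝ)*p)^2)) := by
    intro t ht
    obtain ⟨ht2, htT⟩ := Finset.mem_Icc.mp ht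
    have ht2R : (2:ℝ) ≤ (t:ℝ) := by exact_mod_cast ht2
    have htpos : (0:ℝ) < (t:ℝ) := by linarith
    have htTR : (t:ℝ) ≤ (T:ℝ) := by exact_mod_cast htT
    set g : ℕ → ℝ := fun n => if n < t then 1 else 0 with hg
    set X : Fin T → Ω → ℝ := fun b ω => g (Tb b ω) with hX
    have hgmeas : Measurable g := measurable_from_nat
    have hXmeas : ∀ b, Measurable (X b) := fun b => hgmeas.comp (hmeas b)
    have hXmem : ∀ b, MemLp (X b) 2 μ := fun b =>
      MemLp.of_bound (hXmeas b).aestronglyMeasurable 1 (ae_of_all _ fun ω => by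
        simp only [hX, hg, Real.norm_eq_abs]
        split <;> simp)
    have hsetmeas : ∀ b, MeasurableSet {ω | Tb b ω < t} := fun b =>
      (hmeas b) (measurableSet_Iio : MeasurableSet (Set.Iio t))
    -- the probability that a given unit perishes before t is at most (t-1)p
    have hq : ∀ b, μ {ω | Tb b ω < t} ≤ ENNReal.ofReal (((t:ℝ) - 1) * p) := by
      intro b
      have hsub : {ω | Tb b ω < t} ⊆
          {ω | Tb b ω = 0} ∪ ⋃ k ∈ Finset.Icc 1 (t-1), {ω | Tb b ω = k} := by
        intro ω hω
        rcases Nat.eq_zero_or_pos (Tb b ω) with h0 | h1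
        · exact Or.inl h0
        · refine Or.inr (Set.mem_biUnion ?_ rfl)
          have hk : 1 ≤ Tb b ω ∧ Tb b ω ≤ t-1 := by
            simp only [Set.mem_setOf_eq] at hω
            omega
          exact Finset.mem_Icc.mpr hk
      have h0 : μ {ω | Tb b ω = 0} = 0 := by
        have h := hTb1 b
        rw [ae_iff] at h
        refine measure_mono_null ?_ h
        intro ω hω
        simp only [Set.mem_setOf_eq] at hω ⊢
        omega
      calc μ {ω | Tb b ω < t}
          ≤ μ ({ω | Tb b ω = 0} ∪ ⋃ k ∈ Finset.Icc 1 (t-1), {ω | Tb b ω = k}) :=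
            measure_mono hsub
        _ ≤ μ {ω | Tb b ω = 0} + μ (⋃ k ∈ Finset.Icc 1 (t-1), {ω | Tb b ω = k}) :=
            measure_union_le _ _
        _ = μ (⋃ k ∈ Finset.Icc 1 (t-1), {ω | Tb b ω = k}) := by rw [h0, zero_add]
        _ ≤ ∑ k ∈ Finset.Icc 1 (t-1), μ {ω | Tb b ω = k} := measure_biUnion_finset_le _ _
        _ ≤ ∑ _k ∈ Finset.Icc 1 (t-1), ENNReal.ofReal p := by
            refine Finset.sum_le_sum fun k hk => ?_
            rw [hgeom b k (Finset.mem_Icc.mp hk).1]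
            apply ENNReal.ofReal_le_ofReal
            have h1p : (0:ℝ) ≤ 1 - p := by linarith
            have hle : (1-p)^(k-1) ≤ 1 := pow_le_one₀ h1p (by linarith)
            nlinarith
        _ = (t-1) • ENNReal.ofReal p := by rw [Finset.sum_const, Nat.card_Icc]; norm_num
        _ = ENNReal.ofReal (((t:ℝ)-1) * p) := by
            rw [nsmul_eq_mul, ← ENNReal.ofReal_natCast (t-1),
              ← ENNReal.ofReal_mul (by positivity)]
            congr 1
            have : ((t-1:ℕ):ℝ) = (t:ℝ) - 1 := by
              have := Nat.cast_sub (show 1 ≤ t by omega) (R := ℝ)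
              simpa using this
            rw [this]
    have hqb : ∀ b, (μ {ω | Tb b ω < t}).toReal ≤ ((t:ℝ)-1) * p := fun b =>
      ENNReal.toReal_le_of_le_ofReal (by nlinarith) (hq b)
    have hEX : ∀ b, μ[X b] = (μ {ω | Tb b ω < t}).toReal := by
      intro b
      have hfun : X b = Set.indicator {ω' | Tb b ω' < t} (fun _ => (1:ℝ)) := by
        funext ω
        rw [Set.indicator_apply]
        simp only [hX, hg, Set.mem_setOf_eq]
      rw [hfun, integral_indicator_const _ (hsetmeas b)]
      simp
      rfl
    have hXsq : ∀ b, (X b) ^ 2 = X b := by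
      intro b; funext ω
      simp only [Pi.pow_apply, hX, hg]
      split <;> norm_num
    have hVarb : ∀ b, variance (X b) μ ≤ ((t:ℝ)-1) * p := by
      intro b
      refine le_trans (variance_le_expectation_sq (hXmeas b).aestronglyMeasurable) ?_
      rw [hXsq b, hEX b]
      exact hqb b
    set S : Ω → ℝ := ∑ b : Fin T, X b with hS
    have hSmem : MemLp S 2 μ := memLp_finset_sum' _ (fun b _ => hXmem b)
    have hpair : Set.Pairwise ↑(Finset.univ : Finset (Fin T))
        fun i j => IndepFun (X i) (X j) μ := by
      intro i _ j _ hij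
      exact (hindep.indepFun hij).comp hgmeas hgmeas
    have hVarS : variance S μ ≤ (T:ℝ) * (((t:ℝ)-1) * p) := by
      rw [hS, IndepFun.variance_sum (fun b _ => hXmem b) hpair]
      calc ∑ b : Fin T, variance (X b) μ ≤ ∑ _b : Fin T, ((t:ℝ)-1)*p :=
            Finset.sum_le_sum fun b _ => hVarb b
        _ = (T:ℝ) * (((t:ℝ)-1)*p) := by
            rw [Finset.sum_const, Finset.card_univ, Fintype.card_fin, nsmul_eq_mul]
    have hES : μ[S] ≤ (T:ℝ) * (((t:ℝ)-1) * p) := by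
      have h1 : μ[S] = ∑ b : Fin T, μ[X b] := by
        rw [hS]
        rw [show ((∑ b : Fin T, X b : Ω → ℝ)) = fun ω => ∑ b : Fin T, X b ω from
          funext fun ω => Finset.sum_apply ω Finset.univ X]
        exact integral_finset_sum _ fun b _ => (hXmem b).integrable one_le_two
      rw [h1]
      calc ∑ b : Fin T, μ[X b] ≤ ∑ _b : Fin T, ((t:ℝ)-1)*p :=
            Finset.sum_le_sum fun b _ => by rw [hEX b]; exact hqb b
        _ = (T:ℝ) * (((t:ℝ)-1)*p) := by
            rw [Finset.sum_const, Finset.card_univ, Fintype.card_fin, nsmul_eq_mul]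
    have hES0 : 0 ≤ μ[S] := by
      rw [hS]
      rw [show ((∑ b : Fin T, X b : Ω → ℝ)) = fun ω => ∑ b : Fin T, X b ω from
        funext fun ω => Finset.sum_apply ω Finset.univ X]
      refine integral_nonneg fun ω => Finset.sum_nonneg fun b _ => ?_
      simp only [hX, hg]
      split <;> norm_num
    set c : ℝ := (t:ℝ) * (1 - (T:ℝ)*p) with hc
    have hcpos : 0 < c := mul_pos htpos h1Tp
    have hsub2 : {ω | t ≤ (Finset.univ.filter (fun b : Fin T => Tb b ω < t)).card}
        ⊆ {ω | c ≤ |S ω - μ[S]|} := by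
      intro ω hω
      simp only [Set.mem_setOf_eq] at hω ⊢
      have hSω : S ω = ((Finset.univ.filter (fun b : Fin T => Tb b ω < t)).card : ℝ) := by
        rw [hS, Finset.sum_apply]
        simp only [hX, hg]
        rw [Finset.sum_boole]
      have h1 : (t:ℝ) ≤ S ω := by
        rw [hSω]; exact_mod_cast hω
      have h2 : μ[S] ≤ (t:ℝ)*((T:ℝ)*p) := le_trans hES (by nlinarith)
      have h3 : c ≤ S ω - μ[S] := by rw [hc]; nlinarith
      exact le_trans h3 (le_abs_self _)
    calc μ {ω | t ≤ (Finset.univ.filter (fun b : Fin T => Tb b ω < t)).card}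
        ≤ μ {ω | c ≤ |S ω - μ[S]|} := measure_mono hsub2
      _ ≤ ENNReal.ofReal (variance S μ / c^2) := meas_ge_le_variance_div_sq hSmem hcpos
      _ ≤ ENNReal.ofReal ((T:ℝ)*p / ((t:ℝ) * (1-(T:ℝ)*p)^2)) := by
          apply ENNReal.ofReal_le_ofReal
          have hc2 : c^2 = (t:ℝ)^2*(1-(T:ℝ)*p)^2 := by rw [hc]; ring
          rw [hc2]
          have hden : (0:ℝ) < (t:ℝ)^2*(1-(T:ℝ)*p)^2 := by positivity
          calc variance S μ / ((t:ℝ)^2*(1-(T:ℝ)*p)^2)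
              ≤ ((T:ℝ)*((t:ℝ)*p)) / ((t:ℝ)^2*(1-(T:ℝ)*p)^2) := by
                gcongr
                nlinarith [hVarS]
            _ = (T:ℝ)*p / ((t:ℝ) * (1-(T:ℝ)*p)^2) := by
                field_simp
  -- the good event and its complement
  set E := {ω | ∀ t ∈ Finset.Icc 2 T,
      (Finset.univ.filter (fun b : Fin T => Tb b ω < t)).card ≤ t - 1} with hEdef
  have hEmeas : MeasurableSet E := by
    have hEeq : E = ⋂ t ∈ Finset.Icc 2 T,
        {ω | (Finset.univ.filter (fun b : Fin T => Tb b ω < t)).card ≤ t - 1} := by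
      ext ω
      simp [hEdef, Set.mem_iInter]
    rw [hEeq]
    refine Set.Finite.measurableSet_biInter (Finset.finite_toSet _) fun t _ => ?_
    have hcard : Measurable fun ω =>
        (Finset.univ.filter (fun b : Fin T => Tb b ω < t)).card := by
      have heq : (fun ω => (Finset.univ.filter (fun b : Fin T => Tb b ω < t)).card)
          = fun ω => ∑ b : Fin T, if Tb b ω < t then 1 else 0 := by
        funext ω
        exact Finset.card_filter _ _
      rw [heq]
      exact Finset.measurable_sum _ fun b _ =>
        (measurable_from_nat (f := fun n => if n < t then (1:ℕ) else 0)).comp (hmeas b)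
    exact hcard (measurableSet_Iic : MeasurableSet (Set.Iic (t-1)))
  have hcompl : Eᶜ ⊆ ⋃ t ∈ Finset.Icc 2 T,
      {ω | t ≤ (Finset.univ.filter (fun b : Fin T => Tb b ω < t)).card} := by
    intro ω hω
    simp only [hEdef, Set.mem_compl_iff, Set.mem_setOf_eq, not_forall] at hω
    obtain ⟨t, ht, hcard⟩ := hω
    obtain ⟨ht2, _⟩ := Finset.mem_Icc.mp ht
    refine Set.mem_biUnion ht ?_
    simp only [Set.mem_setOf_eq]
    omega
  have hEc : μ Eᶜ ≤ ENNReal.ofReal (2 * Real.log T * ((T:ℝ)*p) / (1 - (T:ℝ)*p)^2) := by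
    calc μ Eᶜ
        ≤ μ (⋃ t ∈ Finset.Icc 2 T,
            {ω | t ≤ (Finset.univ.filter (fun b : Fin T => Tb b ω < t)).card}) :=
          measure_mono hcompl
      _ ≤ ∑ t ∈ Finset.Icc 2 T,
            μ {ω | t ≤ (Finset.univ.filter (fun b : Fin T => Tb b ω < t)).card} :=
          measure_biUnion_finset_le _ _
      _ ≤ ∑ t ∈ Finset.Icc 2 T, ENNReal.ofReal ((T:ℝ)*p / ((t:ℝ)*(1-(T:ℝ)*p)^2)) :=
          Finset.sum_le_sum key
      _ = ENNReal.ofReal (∑ t ∈ Finset.Icc 2 T, (T:ℝ)*p / ((t:ℝ)*(1-(T:ℝ)*p)^2)) :=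
          (ENNReal.ofReal_sum_of_nonneg fun t ht => by
            have ht2 : 2 ≤ t := (Finset.mem_Icc.mp ht).1
            have : (0:ℝ) < t := by exact_mod_cast Nat.lt_of_lt_of_le Nat.zero_lt_two ht2
            positivity).symm
      _ ≤ ENNReal.ofReal (2 * Real.log T * ((T:ℝ)*p) / (1 - (T:ℝ)*p)^2) := by
          apply ENNReal.ofReal_le_ofReal
          have hsum : ∑ t ∈ Finset.Icc 2 T, (T:ℝ)*p / ((t:ℝ)*(1-(T:ℝ)*p)^2)
              = ((T:ℝ)*p/(1-(T:ℝ)*p)^2) * ∑ t ∈ Finset.Icc 2 T, (1:ℝ)/(t:ℝ) := by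
            rw [Finset.mul_sum]
            refine Finset.sum_congr rfl fun t ht => ?_
            have ht2 : 2 ≤ t := (Finset.mem_Icc.mp ht).1
            have htpos : (0:ℝ) < t := by
              exact_mod_cast Nat.lt_of_lt_of_le Nat.zero_lt_two ht2
            field_simp
          rw [hsum]
          have hharm := harmonic_le_log T hT
          have hfac : (0:ℝ) ≤ (T:ℝ)*p/(1-(T:ℝ)*p)^2 := by positivity
          calc ((T:ℝ)*p/(1-(T:ℝ)*p)^2) * ∑ t ∈ Finset.Icc 2 T, (1:ℝ)/(t:ℝ)
              ≤ ((T:ℝ)*p/(1-(T:ℝ)*p)^2) * Real.log T :=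
                mul_le_mul_of_nonneg_left hharm hfac
            _ = Real.log T * ((T:ℝ)*p) / (1 - (T:ℝ)*p)^2 := by ring
            _ ≤ 2 * Real.log T * ((T:ℝ)*p) / (1 - (T:ℝ)*p)^2 := by
                gcongr ?_ / _
                nlinarith [mul_pos hTpos hp]
  have hdelta0 : (0:ℝ) ≤ 2 * Real.log T * ((T:ℝ)*p) / (1 - (T:ℝ)*p)^2 := by
    apply div_nonneg _ (sq_nonneg _)
    have : (0:ℝ) ≤ (T:ℝ)*p := by positivity
    nlinarith
  have h1 : (μ Eᶜ).toReal ≤ 2 * Real.log T * ((T:ℝ)*p) / (1 - (T:ℝ)*p)^2 :=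
    ENNReal.toReal_le_of_le_ofReal hdelta0 hEc
  have h2 : (μ Eᶜ).toReal = 1 - (μ E).toReal := by
    rw [prob_compl_eq_one_sub hEmeas,
      ENNReal.toReal_sub_of_le prob_le_one ENNReal.one_ne_top]
    simp
  linarith
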